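/- Let V be a vector space over ℂ, D : V → V linear, n a positive integer, J ∈ ℂ with J ≠ 0, N a positive integer, and set λ := −(2N+1)/2. If (φ_l)_{l≥0} in V (with φ_{−1} := 0) satisfies the decoupled recurrence for all l ≥ 1, then the obstruction identity holds: Π_{j=1}^N ((n/(2J))·D² − j²·id_V) φ_0 = 0, i.e. the composition of the operators (n/(2J))D² − j² for j = 1, …, N annihilates φ_0. -/
import Mathlib


/-- The decoupled recurrence: for every `l ≥ 1`,
`2l(2λ+2l+1)·φ_l = (D² + ((2λ+2l−1)(n+2l−2)/(2n))·J + (2l(2λ+n+2l−1)/(2n))·J)·φ_{l−1}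
  − ((2λ+n+2l−3)(n+2l−2)/(4n²))·J²·φ_{l−2}`, with `φ_{−1} := 0`. -/
def DecoupledRec {V : Type*} [AddCommGroup V] [Module ℂ V] (D : V →ₗ[ℂ] V)
    (n : ℕ) (J lam : ℂ) (φ : ℕ → V) : Prop :=
  ∀ l : ℕ, 1 ≤ l →
    (2 * (l : ℂ) * (2 * lam + 2 * (l : ℂ) + 1)) • φ l
      = D (D (φ (l - 1)))
        + ((2 * lam + 2 * (l : ℂ) - 1) * ((n : ℂ) + 2 * (l : ℂ) - 2) / (2 * (n : ℂ)) * J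
            + 2 * (l : ℂ) * (2 * lam + (n : ℂ) + 2 * (l : ℂ) - 1) / (2 * (n : ℂ)) * J)
            • φ (l - 1)
        - ((2 * lam + (n : ℂ) + 2 * (l : ℂ) - 3) * ((n : ℂ) + 2 * (l : ℂ) - 2)
            / (4 * (n : ℂ) ^ 2) * J ^ 2) • (if 2 ≤ l then φ (l - 2) else 0)

noncomputable def obsA (n N : ℕ) (J : ℂ) (l k : ℕ) : ℂ :=
  if k ≤ l then
    (-1 : ℂ) ^ k * (2 * J / (n : ℂ)) ^ l * (∏ j ∈ Finset.Ico k l, ((n : ℂ) + 2 * ((j : ℂ) + 1)))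
      / ((8 : ℂ) ^ (l - k) * (Nat.factorial (l - k) : ℂ) * (4 : ℂ) ^ k * (Nat.factorial k : ℂ)
          * ∏ j ∈ Finset.range k, ((N : ℂ) - ((j : ℂ) + 1)))
  else 0

lemma obsA_eq (n N : ℕ) (J : ℂ) {l k : ℕ} (h : k ≤ l) :
    obsA n N J l k
      = (-1 : ℂ) ^ k * (2 * J / (n : ℂ)) ^ l
          * (∏ j ∈ Finset.Ico k l, ((n : ℂ) + 2 * ((j : ℂ) + 1)))
          / ((8 : ℂ) ^ (l - k) * (Nat.factorial (l - k) : ℂ) * (4 : ℂ) ^ k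
              * (Nat.factorial k : ℂ)
              * ∏ j ∈ Finset.range k, ((N : ℂ) - ((j : ℂ) + 1))) := if_pos h

lemma obsA_zero (n N : ℕ) (J : ℂ) {l k : ℕ} (h : l < k) : obsA n N J l k = 0 :=
  if_neg (by omega)

lemma obsQ_ne (N k : ℕ) (hk : k < N) :
    (∏ j ∈ Finset.range k, ((N : ℂ) - ((j : ℂ) + 1))) ≠ 0 := by
  rw [Finset.prod_ne_zero_iff]
  intro j hj hc
  rw [Finset.mem_range] at hj
  have : (N : ℕ) = j + 1 := by exact_mod_cast eq_of_sub_eq_zero hc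
  omega

lemma csub_ne (N m : ℕ) (h : m + 1 ≠ N) : ((N : ℂ) - ((m : ℂ) + 1)) ≠ 0 := by
  intro hc
  have : (N : ℕ) = m + 1 := by exact_mod_cast eq_of_sub_eq_zero hc
  omega

lemma cfac_ne (m : ℕ) : (Nat.factorial m : ℂ) ≠ 0 :=
  Nat.cast_ne_zero.mpr (Nat.factorial_ne_zero m)

lemma cnat_ne (m : ℕ) : ((m : ℂ) + 1) ≠ 0 := by
  have : ((m + 1 : ℕ) : ℂ) ≠ 0 := Nat.cast_ne_zero.mpr (by omega)
  push_cast at this; exact this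

set_option maxHeartbeats 3200000 in
lemma obsA_rec (n N : ℕ) (hn : 0 < n) (J : ℂ) (hJ : J ≠ 0) (l k : ℕ)
    (hlN : l + 1 ≤ N) (hk : k ≤ l ∨ l + 1 < N) :
    (2 * ((l + 1 : ℕ) : ℂ) * (2 * (-(2 * (N : ℂ) + 1) / 2) + 2 * ((l + 1 : ℕ) : ℂ) + 1))
        * obsA n N J (l + 1) k
      = (if k = 0 then 0 else (2 * J / (n : ℂ)) * obsA n N J l (k - 1))
        + ((2 * J / (n : ℂ)) * (((k : ℂ) + 1) ^ 2)
            + ((2 * (-(2 * (N : ℂ) + 1) / 2) + 2 * ((l + 1 : ℕ) : ℂ) - 1)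
                  * ((n : ℂ) + 2 * ((l + 1 : ℕ) : ℂ) - 2) / (2 * (n : ℂ)) * J
                + 2 * ((l + 1 : ℕ) : ℂ)
                  * (2 * (-(2 * (N : ℂ) + 1) / 2) + (n : ℂ) + 2 * ((l + 1 : ℕ) : ℂ) - 1)
                  / (2 * (n : ℂ)) * J)) * obsA n N J l k
        - ((2 * (-(2 * (N : ℂ) + 1) / 2) + (n : ℂ) + 2 * ((l + 1 : ℕ) : ℂ) - 3)
              * ((n : ℂ) + 2 * ((l + 1 : ℕ) : ℂ) - 2) / (4 * (n : ℂ) ^ 2) * J ^ 2)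
          * (if 2 ≤ l + 1 then obsA n N J (l - 1) k else 0) := by
  have hn' : (n : ℂ) ≠ 0 := Nat.cast_ne_zero.mpr hn.ne'
  rw [show (2 * (-(2 * (N : ℂ) + 1) / 2) + 2 * ((l + 1 : ℕ) : ℂ) - 1)
          * ((n : ℂ) + 2 * ((l + 1 : ℕ) : ℂ) - 2) / (2 * (n : ℂ)) * J
      = (2 * (-(2 * (N : ℂ) + 1) / 2) + 2 * ((l + 1 : ℕ) : ℂ) - 1)
          * ((n : ℂ) + 2 * ((l + 1 : ℕ) : ℂ) - 2) * (2 * J / (n : ℂ)) / 4 from by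
        field_simp; ring]
  rw [show 2 * ((l + 1 : ℕ) : ℂ)
          * (2 * (-(2 * (N : ℂ) + 1) / 2) + (n : ℂ) + 2 * ((l + 1 : ℕ) : ℂ) - 1)
          / (2 * (n : ℂ)) * J
      = 2 * ((l + 1 : ℕ) : ℂ)
          * (2 * (-(2 * (N : ℂ) + 1) / 2) + (n : ℂ) + 2 * ((l + 1 : ℕ) : ℂ) - 1)
          * (2 * J / (n : ℂ)) / 4 from by field_simp; ring]
  rw [show (2 * (-(2 * (N : ℂ) + 1) / 2) + (n : ℂ) + 2 * ((l + 1 : ℕ) : ℂ) - 3)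
          * ((n : ℂ) + 2 * ((l + 1 : ℕ) : ℂ) - 2) / (4 * (n : ℂ) ^ 2) * J ^ 2
      = (2 * (-(2 * (N : ℂ) + 1) / 2) + (n : ℂ) + 2 * ((l + 1 : ℕ) : ℂ) - 3)
          * ((n : ℂ) + 2 * ((l + 1 : ℕ) : ℂ) - 2) * (2 * J / (n : ℂ)) ^ 2 / 16 from by
        field_simp; ring]
  by_cases hkl : k ≤ l + 1
  swap
  · -- k > l + 1 : everything vanishes
    rw [obsA_zero n N J (show l + 1 < k by omega),
        obsA_zero n N J (show l < k - 1 by omega),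
        obsA_zero n N J (show l < k by omega)]
    have hz : (if 2 ≤ l + 1 then obsA n N J (l - 1) k else 0) = 0 := by
      split_ifs with h2
      · exact obsA_zero n N J (by omega)
      · rfl
    rw [hz]
    split_ifs <;> ring
  · have hkN : k < N := by rcases hk with h | h <;> omega
    obtain ⟨m, hm⟩ := Nat.exists_eq_add_of_le hkl
    rcases m with _ | m
    · -- k = l + 1
      obtain rfl : k = l + 1 := by omega
      have hN : l + 1 < N := by rcases hk with h | h <;> omega
      have hz : (if 2 ≤ l + 1 then obsA n N J (l - 1) (l + 1) else 0) = 0 := by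
        split_ifs with h2
        · exact obsA_zero n N J (by omega)
        · rfl
      rw [hz, if_neg (by omega : ¬ (l + 1 = 0)),
          obsA_zero n N J (show l < l + 1 by omega),
          show l + 1 - 1 = l from rfl,
          obsA_eq n N J (le_refl (l + 1)), obsA_eq n N J (le_refl l)]
      simp only [Finset.Ico_self, Finset.prod_empty]
      rw [show l + 1 - (l + 1) = 0 from by omega, show l - l = 0 from by omega]
      rw [Finset.prod_range_succ]
      have hQ := obsQ_ne N l (by omega)
      have hNl : ((N : ℂ) - ((l : ℂ) + 1)) ≠ 0 := csub_ne N l (by omega)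
      have hfac := cfac_ne l
      have h4 : ((4 : ℂ)) ^ (l + 1) ≠ 0 := pow_ne_zero _ (by norm_num)
      have hl1 : ((l : ℂ) + 1) ≠ 0 := cnat_ne l
      simp only [Nat.factorial_succ, Nat.factorial_zero]
      push_cast
      generalize (2 * J / (n : ℂ)) = u
      simp only [pow_zero, pow_one, div_mul_eq_mul_div, mul_div_assoc', div_div, mul_one, one_mul, mul_zero,
        sub_zero, zero_add, add_zero]
      have hD1 : ((4 : ℂ) ^ (l + 1) * (((l : ℂ) + 1) * (Nat.factorial l : ℂ))
          * ((∏ x ∈ Finset.range l, ((N : ℂ) - ((x : ℂ) + 1))) * ((N : ℂ) - ((l : ℂ) + 1)))) ≠ 0 := by apply_rules [mul_ne_zero] <;> first | assumption | exact pow_ne_zero _ (by norm_num) | norm_num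
      have hD2 : ((4 : ℂ) ^ l * (Nat.factorial l : ℂ)
          * ∏ x ∈ Finset.range l, ((N : ℂ) - ((x : ℂ) + 1))) ≠ 0 := by apply_rules [mul_ne_zero] <;> first | assumption | exact pow_ne_zero _ (by norm_num) | norm_num
      rw [div_eq_div_iff hD1 hD2]
      ring
    · rcases m with _ | m
      · -- k = l
        obtain rfl : l = k := by omega
        have hz : (if 2 ≤ l + 1 then obsA n N J (l - 1) l else 0) = 0 := by
          split_ifs with h2
          · exact obsA_zero n N J (by omega)
          · rfl
        rw [hz]
        rw [obsA_eq n N J (show l ≤ l + 1 by omega), obsA_eq n N J (le_refl l)]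
        rw [Finset.prod_Ico_succ_top (le_refl l) _]
        simp only [Finset.Ico_self, Finset.prod_empty]
        rw [show l + 1 - l = 1 from by omega, show l - l = 0 from by omega]
        have h4 : ((4 : ℂ)) ^ l ≠ 0 := pow_ne_zero _ (by norm_num)
        rcases l with _ | k''
        · -- l = 0
          rw [if_pos rfl]
          simp only [Nat.factorial_one, Nat.factorial_zero, Finset.range_zero,
            Finset.prod_empty]
          push_cast
          generalize (2 * J / (n : ℂ)) = u
          simp only [pow_zero, pow_one, div_mul_eq_mul_div, mul_div_assoc', div_div, mul_one, one_mul, mul_zero,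
            sub_zero, zero_add, add_zero]
          rw [div_eq_div_iff (show (8 : ℂ) ≠ 0 by norm_num) (show (1 : ℂ) ≠ 0 by norm_num)]
          ring
        · -- l = k'' + 1
          rw [if_neg (by omega : ¬ (k'' + 1 = 0)), show k'' + 1 - 1 = k'' from rfl,
              obsA_eq n N J (show k'' ≤ k'' + 1 by omega)]
          rw [Finset.prod_Ico_succ_top (le_refl k'') _]
          simp only [Finset.Ico_self, Finset.prod_empty]
          rw [show k'' + 1 - k'' = 1 from by omega]
          rw [Finset.prod_range_succ]
          have hQ := obsQ_ne N k'' (by omega)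
          have hNl : ((N : ℂ) - ((k'' : ℂ) + 1)) ≠ 0 := csub_ne N k'' (by omega)
          have hfac := cfac_ne k''
          have h4' : ((4 : ℂ)) ^ k'' ≠ 0 := pow_ne_zero _ (by norm_num)
          have hk1 : ((k'' : ℂ) + 1) ≠ 0 := cnat_ne k''
          simp only [Nat.factorial_succ, Nat.factorial_one, Nat.factorial_zero]
          push_cast
          generalize (2 * J / (n : ℂ)) = u
          simp only [pow_zero, pow_one, div_mul_eq_mul_div, mul_div_assoc', div_div, mul_one, one_mul, mul_zero,
            sub_zero, zero_add, add_zero]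
          have hDa : ((8 : ℂ) * (4 : ℂ) ^ k'' * (Nat.factorial k'' : ℂ)
              * ∏ x ∈ Finset.range k'', ((N : ℂ) - ((x : ℂ) + 1))) ≠ 0 := by apply_rules [mul_ne_zero] <;> first | assumption | exact pow_ne_zero _ (by norm_num) | norm_num
          have hDb : ((4 : ℂ) ^ (k'' + 1) * (((k'' : ℂ) + 1) * (Nat.factorial k'' : ℂ))
              * ((∏ x ∈ Finset.range k'', ((N : ℂ) - ((x : ℂ) + 1))) * ((N : ℂ) - ((k'' : ℂ) + 1)))) ≠ 0 := by apply_rules [mul_ne_zero] <;> first | assumption | exact pow_ne_zero _ (by norm_num) | norm_num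
          have hD1 : ((8 : ℂ) * (4 : ℂ) ^ (k'' + 1) * (((k'' : ℂ) + 1) * (Nat.factorial k'' : ℂ))
              * ((∏ x ∈ Finset.range k'', ((N : ℂ) - ((x : ℂ) + 1))) * ((N : ℂ) - ((k'' : ℂ) + 1)))) ≠ 0 := by apply_rules [mul_ne_zero] <;> first | assumption | exact pow_ne_zero _ (by norm_num) | norm_num
          rw [div_add_div _ _ hDa hDb, div_eq_div_iff hD1 (mul_ne_zero hDa hDb)]
          ring
      · -- l = k + m + 1
        obtain rfl : l = k + m + 1 := by omega
        rw [if_pos (by omega : 2 ≤ k + m + 1 + 1), show k + m + 1 - 1 = k + m from by omega]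
        rw [obsA_eq n N J (show k ≤ k + m + 1 + 1 by omega),
            obsA_eq n N J (show k ≤ k + m + 1 by omega),
            obsA_eq n N J (show k ≤ k + m by omega)]
        rw [Finset.prod_Ico_succ_top (show k ≤ k + m + 1 by omega) _,
            Finset.prod_Ico_succ_top (show k ≤ k + m by omega) _]
        rw [show k + m + 1 + 1 - k = m + 1 + 1 from by omega,
            show k + m + 1 - k = m + 1 from by omega,
            show k + m - k = m from by omega]
        have h8a : ((8 : ℂ)) ^ (m + 1 + 1) ≠ 0 := pow_ne_zero _ (by norm_num)
        have h8b : ((8 : ℂ)) ^ (m + 1) ≠ 0 := pow_ne_zero _ (by norm_num)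
        have h8c : ((8 : ℂ)) ^ m ≠ 0 := pow_ne_zero _ (by norm_num)
        have hfm := cfac_ne m
        have hm1 : ((m : ℂ) + 1) ≠ 0 := cnat_ne m
        have hm2 : ((m : ℂ) + 1 + 1) ≠ 0 := by
          have : ((m + 2 : ℕ) : ℂ) ≠ 0 := Nat.cast_ne_zero.mpr (by omega)
          push_cast at this
          intro hc
          apply this
          rw [← hc]; ring
        rcases k with _ | k''
        · -- k = 0
          rw [if_pos rfl]
          simp only [Nat.factorial_succ, Nat.factorial_zero, Finset.range_zero,
            Finset.prod_empty]
          push_cast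
          generalize (2 * J / (n : ℂ)) = u
          simp only [pow_zero, pow_one, div_mul_eq_mul_div, mul_div_assoc', div_div, mul_one, one_mul, mul_zero,
            sub_zero, zero_add, add_zero]
          have hDa : ((8 : ℂ) ^ (m + 1) * (((m : ℂ) + 1) * (Nat.factorial m : ℂ))) ≠ 0 := by apply_rules [mul_ne_zero] <;> first | assumption | exact pow_ne_zero _ (by norm_num) | norm_num
          have hDb : ((16 : ℂ) * ((8 : ℂ) ^ m * (Nat.factorial m : ℂ))) ≠ 0 := by apply_rules [mul_ne_zero] <;> first | assumption | exact pow_ne_zero _ (by norm_num) | norm_num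
          have hD1 : ((8 : ℂ) ^ (m + 1 + 1) * (((m : ℂ) + 1 + 1) * (((m : ℂ) + 1) * (Nat.factorial m : ℂ)))) ≠ 0 := by apply_rules [mul_ne_zero] <;> first | assumption | exact pow_ne_zero _ (by norm_num) | norm_num
          rw [div_sub_div _ _ hDa hDb, div_eq_div_iff hD1 (mul_ne_zero hDa hDb)]
          ring
        · -- k = k'' + 1
          rw [if_neg (by omega : ¬ (k'' + 1 = 0)), show k'' + 1 - 1 = k'' from rfl,
              obsA_eq n N J (show k'' ≤ k'' + 1 + m + 1 by omega)]
          rw [Finset.prod_eq_prod_Ico_succ_bot (show k'' < k'' + 1 + m + 1 by omega) _,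
              Finset.prod_Ico_succ_top (show k'' + 1 ≤ k'' + 1 + m by omega) _]
          rw [show k'' + 1 + m + 1 - k'' = m + 1 + 1 from by omega]
          rw [Finset.prod_range_succ]
          have hQ := obsQ_ne N k'' (by omega)
          have hNl : ((N : ℂ) - ((k'' : ℂ) + 1)) ≠ 0 := csub_ne N k'' (by omega)
          have hfac := cfac_ne k''
          have h4' : ((4 : ℂ)) ^ k'' ≠ 0 := pow_ne_zero _ (by norm_num)
          have h4'' : ((4 : ℂ)) ^ (k'' + 1) ≠ 0 := pow_ne_zero _ (by norm_num)
          have hk1 : ((k'' : ℂ) + 1) ≠ 0 := cnat_ne k''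
          simp only [Nat.factorial_succ, Nat.factorial_zero]
          push_cast
          generalize (2 * J / (n : ℂ)) = u
          simp only [pow_zero, pow_one, div_mul_eq_mul_div, mul_div_assoc', div_div, mul_one, one_mul, mul_zero,
            sub_zero, zero_add, add_zero]
          have hDa : ((8 : ℂ) ^ (m + 1 + 1) * (((m : ℂ) + 1 + 1) * (((m : ℂ) + 1) * (Nat.factorial m : ℂ)))
              * (4 : ℂ) ^ k'' * (Nat.factorial k'' : ℂ)
              * ∏ x ∈ Finset.range k'', ((N : ℂ) - ((x : ℂ) + 1))) ≠ 0 := by apply_rules [mul_ne_zero] <;> first | assumption | exact pow_ne_zero _ (by norm_num) | norm_num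
          have hDb : ((8 : ℂ) ^ (m + 1) * (((m : ℂ) + 1) * (Nat.factorial m : ℂ))
              * (4 : ℂ) ^ (k'' + 1) * (((k'' : ℂ) + 1) * (Nat.factorial k'' : ℂ))
              * ((∏ x ∈ Finset.range k'', ((N : ℂ) - ((x : ℂ) + 1))) * ((N : ℂ) - ((k'' : ℂ) + 1)))) ≠ 0 := by apply_rules [mul_ne_zero] <;> first | assumption | exact pow_ne_zero _ (by norm_num) | norm_num
          have hDc : ((16 : ℂ) * ((8 : ℂ) ^ m * (Nat.factorial m : ℂ)
              * (4 : ℂ) ^ (k'' + 1) * (((k'' : ℂ) + 1) * (Nat.factorial k'' : ℂ))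
              * ((∏ x ∈ Finset.range k'', ((N : ℂ) - ((x : ℂ) + 1))) * ((N : ℂ) - ((k'' : ℂ) + 1))))) ≠ 0 := by apply_rules [mul_ne_zero] <;> first | assumption | exact pow_ne_zero _ (by norm_num) | norm_num
          have hD1 : ((8 : ℂ) ^ (m + 1 + 1) * (((m : ℂ) + 1 + 1) * (((m : ℂ) + 1) * (Nat.factorial m : ℂ)))
              * (4 : ℂ) ^ (k'' + 1) * (((k'' : ℂ) + 1) * (Nat.factorial k'' : ℂ))
              * ((∏ x ∈ Finset.range k'', ((N : ℂ) - ((x : ℂ) + 1))) * ((N : ℂ) - ((k'' : ℂ) + 1)))) ≠ 0 := by apply_rules [mul_ne_zero] <;> first | assumption | exact pow_ne_zero _ (by norm_num) | norm_num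
          rw [div_add_div _ _ hDa hDb, div_sub_div _ _ (mul_ne_zero hDa hDb) hDc,
              div_eq_div_iff hD1 (mul_ne_zero (mul_ne_zero hDa hDb) hDc)]
          ring

noncomputable def obsProd {V : Type*} [AddCommGroup V] [Module ℂ V]
    (T : Module.End ℂ V) (k : ℕ) : Module.End ℂ V :=
  ((List.range k).map (fun j => T - ((j : ℂ) + 1) ^ 2 • (1 : Module.End ℂ V))).prod

lemma obsProd_zero {V : Type*} [AddCommGroup V] [Module ℂ V] (T : Module.End ℂ V) :
    obsProd T 0 = 1 := by
  simp [obsProd]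

lemma obsProd_succ {V : Type*} [AddCommGroup V] [Module ℂ V] (T : Module.End ℂ V) (k : ℕ) :
    obsProd T (k + 1) = obsProd T k * (T - ((k : ℂ) + 1) ^ 2 • 1) := by
  simp [obsProd, List.range_succ]

lemma obsProd_comm {V : Type*} [AddCommGroup V] [Module ℂ V] (T : Module.End ℂ V) (k : ℕ) :
    Commute T (obsProd T k) := by
  induction k with
  | zero => rw [obsProd_zero]; exact Commute.one_right T
  | succ k ih =>
      rw [obsProd_succ]
      exact ih.mul_right ((Commute.refl T).sub_right ((Commute.one_right T).smul_right _))

lemma obsProd_step {V : Type*} [AddCommGroup V] [Module ℂ V] (T : Module.End ℂ V) (k : ℕ)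
    (v : V) :
    T (obsProd T k v) = obsProd T (k + 1) v + ((k : ℂ) + 1) ^ 2 • obsProd T k v := by
  have hC : Commute (T - ((k : ℂ) + 1) ^ 2 • 1) (obsProd T k) :=
    (obsProd_comm T k).sub_left (((Commute.one_left (obsProd T k))).smul_left _)
  have h1 : obsProd T (k + 1) v = T (obsProd T k v) - ((k : ℂ) + 1) ^ 2 • obsProd T k v := by
    rw [obsProd_succ, ← hC.eq]
    simp [Module.End.mul_apply, LinearMap.sub_apply, LinearMap.smul_apply, Module.End.one_apply]
  rw [h1]
  abel

set_option maxHeartbeats 1600000 in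
/-- The obstruction identity at `λ = −(2N+1)/2`: the composition of the operators
`(n/(2J))·D² − j²·id` for `j = 1, …, N` annihilates `φ_0`. -/
theorem stmt13 {V : Type*} [AddCommGroup V] [Module ℂ V] (D : V →ₗ[ℂ] V)
    (n : ℕ) (hn : 0 < n) (J : ℂ) (hJ : J ≠ 0) (N : ℕ) (hN : 0 < N) (φ : ℕ → V)
    (h : DecoupledRec D n J (-(2 * (N : ℂ) + 1) / 2) φ) :
    ((List.range N).map (fun j =>
        ((n : ℂ) / (2 * J)) • (D ∘ₗ D : Module.End ℂ V)
          - ((j : ℂ) + 1) ^ 2 • (1 : Module.End ℂ V))).prod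
      (φ 0) = 0 := by

  obtain ⟨N', rfl⟩ : ∃ N', N = N' + 1 := ⟨N - 1, by omega⟩
  have hn' : (n : ℂ) ≠ 0 := Nat.cast_ne_zero.mpr hn.ne'
  show obsProd (((n : ℂ) / (2 * J)) • (D ∘ₗ D : Module.End ℂ V)) (N' + 1) (φ 0) = 0
  set T : Module.End ℂ V := ((n : ℂ) / (2 * J)) • (D ∘ₗ D : Module.End ℂ V) with hT
  have hDT : (D ∘ₗ D : Module.End ℂ V) = (2 * J / (n : ℂ)) • T := by
    rw [hT, smul_smul, show (2 * J / (n : ℂ)) * ((n : ℂ) / (2 * J)) = 1 from by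
      field_simp, one_smul]
  have hDD : ∀ (k : ℕ) (v : V), D (D (obsProd T k v))
      = (2 * J / (n : ℂ)) • obsProd T (k + 1) v
        + ((2 * J / (n : ℂ)) * ((k : ℂ) + 1) ^ 2) • obsProd T k v := by
    intro k v
    have h1 : D (D (obsProd T k v)) = (D ∘ₗ D : Module.End ℂ V) (obsProd T k v) := rfl
    rw [h1, hDT, LinearMap.smul_apply, obsProd_step, smul_add, smul_smul]
  have hext : ∀ (t b : ℕ), t < b →
      (∑ k ∈ Finset.range (t + 1), obsA n (N' + 1) J t k • obsProd T k (φ 0))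
        = ∑ k ∈ Finset.range b, obsA n (N' + 1) J t k • obsProd T k (φ 0) := by
    intro t b hb
    refine Finset.sum_subset (Finset.range_subset_range.mpr hb) ?_
    intro k hk hk'
    simp only [Finset.mem_range] at hk'
    rw [obsA_zero n (N' + 1) J (by omega), zero_smul]
  have hXsum : ∀ l' : ℕ,
      φ l' = (∑ k ∈ Finset.range (l' + 1 + 1), obsA n (N' + 1) J l' k • obsProd T k (φ 0)) →
      (if 2 ≤ l' + 1 then φ (l' - 1) else 0)
          = (∑ k ∈ Finset.range (l' + 1 + 1),
              (if 2 ≤ l' + 1 then obsA n (N' + 1) J (l' - 1) k else 0) • obsProd T k (φ 0)) →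
      (2 * ((l' + 1 : ℕ) : ℂ)
          * (2 * (-(2 * ((N' + 1 : ℕ) : ℂ) + 1) / 2) + 2 * ((l' + 1 : ℕ) : ℂ) + 1)) • φ (l' + 1)
        = ∑ k ∈ Finset.range (l' + 1 + 1),
            ((if k = 0 then 0 else (2 * J / (n : ℂ)) * obsA n (N' + 1) J l' (k - 1))
              + ((2 * J / (n : ℂ)) * (((k : ℂ) + 1) ^ 2)
                  + ((2 * (-(2 * ((N' + 1 : ℕ) : ℂ) + 1) / 2) + 2 * ((l' + 1 : ℕ) : ℂ) - 1)
                        * ((n : ℂ) + 2 * ((l' + 1 : ℕ) : ℂ) - 2) / (2 * (n : ℂ)) * J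
                      + 2 * ((l' + 1 : ℕ) : ℂ)
                        * (2 * (-(2 * ((N' + 1 : ℕ) : ℂ) + 1) / 2) + (n : ℂ)
                            + 2 * ((l' + 1 : ℕ) : ℂ) - 1) / (2 * (n : ℂ)) * J))
                  * obsA n (N' + 1) J l' k
              - ((2 * (-(2 * ((N' + 1 : ℕ) : ℂ) + 1) / 2) + (n : ℂ)
                    + 2 * ((l' + 1 : ℕ) : ℂ) - 3)
                    * ((n : ℂ) + 2 * ((l' + 1 : ℕ) : ℂ) - 2) / (4 * (n : ℂ) ^ 2) * J ^ 2)
                  * (if 2 ≤ l' + 1 then obsA n (N' + 1) J (l' - 1) k else 0)) • obsProd T k (φ 0) := by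
    intro l' hφ1 hφ2
    have hrec := h (l' + 1) (by omega)
    rw [show l' + 1 - 1 = l' from by omega, show l' + 1 - 2 = l' - 1 from by omega] at hrec
    rw [hφ1, hφ2] at hrec
    simp only [map_sum, map_smul] at hrec
    rw [hrec, Finset.smul_sum, Finset.smul_sum]
    have hsh : (∑ k ∈ Finset.range (l' + 1 + 1),
          ((2 * J / (n : ℂ)) * obsA n (N' + 1) J l' k) • obsProd T (k + 1) (φ 0))
        = ∑ k ∈ Finset.range (l' + 1 + 1),
            (if k = 0 then 0 else (2 * J / (n : ℂ)) * obsA n (N' + 1) J l' (k - 1))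
              • obsProd T k (φ 0) := by
      rw [Finset.sum_range_succ' (fun k =>
        (if k = 0 then 0 else (2 * J / (n : ℂ)) * obsA n (N' + 1) J l' (k - 1))
          • obsProd T k (φ 0)) (l' + 1)]
      rw [Finset.sum_range_succ]
      simp [obsA_zero n (N' + 1) J (show l' < l' + 1 by omega)]
    have hD : (∑ k ∈ Finset.range (l' + 1 + 1),
          obsA n (N' + 1) J l' k • D (D (obsProd T k (φ 0))))
        = (∑ k ∈ Finset.range (l' + 1 + 1),
            (if k = 0 then 0 else (2 * J / (n : ℂ)) * obsA n (N' + 1) J l' (k - 1))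
              • obsProd T k (φ 0))
          + ∑ k ∈ Finset.range (l' + 1 + 1),
              ((2 * J / (n : ℂ)) * ((k : ℂ) + 1) ^ 2 * obsA n (N' + 1) J l' k)
                • obsProd T k (φ 0) := by
      have hpoint : (∑ k ∈ Finset.range (l' + 1 + 1),
            obsA n (N' + 1) J l' k • D (D (obsProd T k (φ 0))))
          = ∑ k ∈ Finset.range (l' + 1 + 1),
              (((2 * J / (n : ℂ)) * obsA n (N' + 1) J l' k) • obsProd T (k + 1) (φ 0)
                + ((2 * J / (n : ℂ)) * ((k : ℂ) + 1) ^ 2 * obsA n (N' + 1) J l' k)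
                    • obsProd T k (φ 0)) := by
        refine Finset.sum_congr rfl fun k _ => ?_
        rw [hDD k (φ 0), smul_add, smul_smul, smul_smul,
          mul_comm (obsA n (N' + 1) J l' k) (2 * J / (n : ℂ)),
          mul_comm (obsA n (N' + 1) J l' k) ((2 * J / (n : ℂ)) * ((k : ℂ) + 1) ^ 2)]
      rw [hpoint, Finset.sum_add_distrib, hsh]
    rw [hD]
    rw [← Finset.sum_add_distrib, ← Finset.sum_add_distrib, ← Finset.sum_sub_distrib]
    refine Finset.sum_congr rfl fun k _ => ?_
    rw [smul_smul, smul_smul, ← add_smul, ← add_smul, ← sub_smul]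
    congr 1
    ring
  have main : ∀ l, l < N' + 1 →
      φ l = ∑ k ∈ Finset.range (l + 1), obsA n (N' + 1) J l k • obsProd T k (φ 0) := by
    intro l
    induction l using Nat.strong_induction_on with
    | _ l ih =>
      intro hlN
      rcases l with _ | l'
      · simp only [Nat.zero_add, Finset.sum_range_one]
        have h00 : obsA n (N' + 1) J 0 0 = 1 := by
          norm_num [obsA, Finset.Ico_self]
        rw [h00, one_smul, obsProd_zero]
        rfl
      · have hφ1 : φ l' = ∑ k ∈ Finset.range (l' + 1 + 1),
            obsA n (N' + 1) J l' k • obsProd T k (φ 0) := by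
          rw [ih l' (by omega) (by omega)]
          exact hext l' (l' + 1 + 1) (by omega)
        have hφ2 : (if 2 ≤ l' + 1 then φ (l' - 1) else 0)
            = ∑ k ∈ Finset.range (l' + 1 + 1),
                (if 2 ≤ l' + 1 then obsA n (N' + 1) J (l' - 1) k else 0) • obsProd T k (φ 0) := by
          by_cases h2 : 2 ≤ l' + 1
          · simp only [if_pos h2]
            rw [ih (l' - 1) (by omega) (by omega)]
            exact hext (l' - 1) (l' + 1 + 1) (by omega)
          · simp only [if_neg h2, zero_smul, Finset.sum_const_zero]
        have hkey := hXsum l' hφ1 hφ2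
        have hco : ∀ k ∈ Finset.range (l' + 1 + 1),
            ((if k = 0 then 0 else (2 * J / (n : ℂ)) * obsA n (N' + 1) J l' (k - 1))
              + ((2 * J / (n : ℂ)) * (((k : ℂ) + 1) ^ 2)
                  + ((2 * (-(2 * ((N' + 1 : ℕ) : ℂ) + 1) / 2) + 2 * ((l' + 1 : ℕ) : ℂ) - 1)
                        * ((n : ℂ) + 2 * ((l' + 1 : ℕ) : ℂ) - 2) / (2 * (n : ℂ)) * J
                      + 2 * ((l' + 1 : ℕ) : ℂ)
                        * (2 * (-(2 * ((N' + 1 : ℕ) : ℂ) + 1) / 2) + (n : ℂ)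
                            + 2 * ((l' + 1 : ℕ) : ℂ) - 1) / (2 * (n : ℂ)) * J))
                  * obsA n (N' + 1) J l' k
              - ((2 * (-(2 * ((N' + 1 : ℕ) : ℂ) + 1) / 2) + (n : ℂ)
                    + 2 * ((l' + 1 : ℕ) : ℂ) - 3)
                    * ((n : ℂ) + 2 * ((l' + 1 : ℕ) : ℂ) - 2) / (4 * (n : ℂ) ^ 2) * J ^ 2)
                  * (if 2 ≤ l' + 1 then obsA n (N' + 1) J (l' - 1) k else 0)) • obsProd T k (φ 0)
              = ((2 * ((l' + 1 : ℕ) : ℂ)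
          * (2 * (-(2 * ((N' + 1 : ℕ) : ℂ) + 1) / 2) + 2 * ((l' + 1 : ℕ) : ℂ) + 1)) * obsA n (N' + 1) J (l' + 1) k) • obsProd T k (φ 0) := by
          intro k _
          congr 1
          exact (obsA_rec n (N' + 1) hn J hJ l' k (by omega) (Or.inr (by omega))).symm
        rw [Finset.sum_congr rfl hco] at hkey
        have hA : (2 * ((l' + 1 : ℕ) : ℂ)
          * (2 * (-(2 * ((N' + 1 : ℕ) : ℂ) + 1) / 2) + 2 * ((l' + 1 : ℕ) : ℂ) + 1)) ≠ 0 := by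
          have h1 : ((l' + 1 : ℕ) : ℂ) ≠ 0 := Nat.cast_ne_zero.mpr (by omega)
          have h2 : (((l' + 1 : ℕ) : ℂ) - ((N' + 1 : ℕ) : ℂ)) ≠ 0 := by
            rw [sub_ne_zero]
            intro hc
            exact absurd (Nat.cast_injective hc) (by omega)
          rw [show (2 * ((l' + 1 : ℕ) : ℂ)
          * (2 * (-(2 * ((N' + 1 : ℕ) : ℂ) + 1) / 2) + 2 * ((l' + 1 : ℕ) : ℂ) + 1))
              = 2 * ((l' + 1 : ℕ) : ℂ) * (2 * (((l' + 1 : ℕ) : ℂ) - ((N' + 1 : ℕ) : ℂ))) from by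
            push_cast; ring]
          exact mul_ne_zero (mul_ne_zero (by norm_num) h1)
            (mul_ne_zero (by norm_num) h2)
        calc φ (l' + 1)
            = ((2 * ((l' + 1 : ℕ) : ℂ)
          * (2 * (-(2 * ((N' + 1 : ℕ) : ℂ) + 1) / 2) + 2 * ((l' + 1 : ℕ) : ℂ) + 1)))⁻¹ • ((2 * ((l' + 1 : ℕ) : ℂ)
          * (2 * (-(2 * ((N' + 1 : ℕ) : ℂ) + 1) / 2) + 2 * ((l' + 1 : ℕ) : ℂ) + 1)) • φ (l' + 1)) := by
              rw [smul_smul, inv_mul_cancel₀ hA, one_smul]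
          _ = (((2 * ((l' + 1 : ℕ) : ℂ)
          * (2 * (-(2 * ((N' + 1 : ℕ) : ℂ) + 1) / 2) + 2 * ((l' + 1 : ℕ) : ℂ) + 1))))⁻¹ • (∑ k ∈ Finset.range (l' + 1 + 1),
                ((2 * ((l' + 1 : ℕ) : ℂ)
          * (2 * (-(2 * ((N' + 1 : ℕ) : ℂ) + 1) / 2) + 2 * ((l' + 1 : ℕ) : ℂ) + 1)) * obsA n (N' + 1) J (l' + 1) k) • obsProd T k (φ 0)) := by rw [hkey]
          _ = ∑ k ∈ Finset.range (l' + 1 + 1),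
                obsA n (N' + 1) J (l' + 1) k • obsProd T k (φ 0) := by
              rw [Finset.smul_sum]
              refine Finset.sum_congr rfl fun k _ => ?_
              rw [smul_smul, ← mul_assoc, inv_mul_cancel₀ hA, one_mul]
  have hφ1N : φ N' = ∑ k ∈ Finset.range (N' + 1 + 1),
      obsA n (N' + 1) J N' k • obsProd T k (φ 0) := by
    rw [main N' (by omega)]
    exact hext N' (N' + 1 + 1) (by omega)
  have hφ2N : (if 2 ≤ N' + 1 then φ (N' - 1) else 0)
      = ∑ k ∈ Finset.range (N' + 1 + 1),
          (if 2 ≤ N' + 1 then obsA n (N' + 1) J (N' - 1) k else 0) • obsProd T k (φ 0) := by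
    by_cases h2 : 2 ≤ N' + 1
    · simp only [if_pos h2]
      rw [main (N' - 1) (by omega)]
      exact hext (N' - 1) (N' + 1 + 1) (by omega)
    · simp only [if_neg h2, zero_smul, Finset.sum_const_zero]
  have hkey := hXsum N' hφ1N hφ2N
  have hzero : (2 * ((N' + 1 : ℕ) : ℂ)
          * (2 * (-(2 * ((N' + 1 : ℕ) : ℂ) + 1) / 2) + 2 * ((N' + 1 : ℕ) : ℂ) + 1)) = 0 := by push_cast; ring
  rw [hzero, zero_smul] at hkey
  rw [Finset.sum_range_succ] at hkey
  have hz : ∀ k ∈ Finset.range (N' + 1),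
      ((if k = 0 then 0 else (2 * J / (n : ℂ)) * obsA n (N' + 1) J N' (k - 1))
              + ((2 * J / (n : ℂ)) * (((k : ℂ) + 1) ^ 2)
                  + ((2 * (-(2 * ((N' + 1 : ℕ) : ℂ) + 1) / 2) + 2 * ((N' + 1 : ℕ) : ℂ) - 1)
                        * ((n : ℂ) + 2 * ((N' + 1 : ℕ) : ℂ) - 2) / (2 * (n : ℂ)) * J
                      + 2 * ((N' + 1 : ℕ) : ℂ)
                        * (2 * (-(2 * ((N' + 1 : ℕ) : ℂ) + 1) / 2) + (n : ℂ)
                            + 2 * ((N' + 1 : ℕ) : ℂ) - 1) / (2 * (n : ℂ)) * J))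
                  * obsA n (N' + 1) J N' k
              - ((2 * (-(2 * ((N' + 1 : ℕ) : ℂ) + 1) / 2) + (n : ℂ)
                    + 2 * ((N' + 1 : ℕ) : ℂ) - 3)
                    * ((n : ℂ) + 2 * ((N' + 1 : ℕ) : ℂ) - 2) / (4 * (n : ℂ) ^ 2) * J ^ 2)
                  * (if 2 ≤ N' + 1 then obsA n (N' + 1) J (N' - 1) k else 0)) • obsProd T k (φ 0) = 0 := by
    intro k hk
    rw [Finset.mem_range] at hk
    rw [← obsA_rec n (N' + 1) hn J hJ N' k (by omega) (Or.inl (by omega)), hzero, zero_mul,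
      zero_smul]
  rw [Finset.sum_eq_zero hz, zero_add] at hkey
  have htop : (fun k => ((if k = 0 then 0 else (2 * J / (n : ℂ)) * obsA n (N' + 1) J N' (k - 1))
              + ((2 * J / (n : ℂ)) * (((k : ℂ) + 1) ^ 2)
                  + ((2 * (-(2 * ((N' + 1 : ℕ) : ℂ) + 1) / 2) + 2 * ((N' + 1 : ℕ) : ℂ) - 1)
                        * ((n : ℂ) + 2 * ((N' + 1 : ℕ) : ℂ) - 2) / (2 * (n : ℂ)) * J
                      + 2 * ((N' + 1 : ℕ) : ℂ)
                        * (2 * (-(2 * ((N' + 1 : ℕ) : ℂ) + 1) / 2) + (n : ℂ)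
                            + 2 * ((N' + 1 : ℕ) : ℂ) - 1) / (2 * (n : ℂ)) * J))
                  * obsA n (N' + 1) J N' k
              - ((2 * (-(2 * ((N' + 1 : ℕ) : ℂ) + 1) / 2) + (n : ℂ)
                    + 2 * ((N' + 1 : ℕ) : ℂ) - 3)
                    * ((n : ℂ) + 2 * ((N' + 1 : ℕ) : ℂ) - 2) / (4 * (n : ℂ) ^ 2) * J ^ 2)
                  * (if 2 ≤ N' + 1 then obsA n (N' + 1) J (N' - 1) k else 0))) (N' + 1)
      = (2 * J / (n : ℂ)) * obsA n (N' + 1) J N' N' := by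
    simp only at *
    rw [if_neg (Nat.succ_ne_zero N'), show N' + 1 - 1 = N' from rfl,
      obsA_zero n (N' + 1) J (show N' < N' + 1 by omega)]
    have hz2 : (if 2 ≤ N' + 1 then obsA n (N' + 1) J (N' - 1) (N' + 1) else 0) = 0 := by
      split_ifs with h2
      · exact obsA_zero n (N' + 1) J (by omega)
      · rfl
    rw [hz2]
    ring
  simp only at htop
  rw [htop] at hkey
  have hne : (2 * J / (n : ℂ)) * obsA n (N' + 1) J N' N' ≠ 0 := by
    have hu : (2 * J / (n : ℂ)) ≠ 0 := div_ne_zero (by simpa using hJ) hn'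
    refine mul_ne_zero hu ?_
    rw [obsA_eq n (N' + 1) J (le_refl N')]
    simp only [Finset.Ico_self, Finset.prod_empty, Nat.sub_self]
    refine div_ne_zero ?_ ?_
    · exact mul_ne_zero (mul_ne_zero (pow_ne_zero _ (by norm_num)) (pow_ne_zero _ hu)) one_ne_zero
    · apply_rules [mul_ne_zero]
      · norm_num
      · exact cfac_ne 0
      · exact pow_ne_zero _ (by norm_num)
      · exact cfac_ne N'
      · exact obsQ_ne (N' + 1) N' (by omega)
  calc obsProd T (N' + 1) (φ 0)
      = ((2 * J / (n : ℂ)) * obsA n (N' + 1) J N' N')⁻¹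
          • (((2 * J / (n : ℂ)) * obsA n (N' + 1) J N' N') • obsProd T (N' + 1) (φ 0)) := by
        rw [smul_smul, inv_mul_cancel₀ hne, one_smul]
    _ = 0 := by rw [← hkey, smul_zero]
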